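/- arXiv:math/0509609 — 3 statements merged into one kernel-verified Lean document; each statement's English description precedes it below -/
import Mathlib

section
/- Let L:(0,∞)→(0,∞) be a continuous, strictly monotone increasing, slowly varying function with L(t)→∞ as t→∞, and for fixed x∈(0,1) define a_t(x) := L^{-1}(x·L(t)). Then a_t(x) → ∞ and a_t(x)/t → 0 as t → ∞. -/
open MeasureTheory Filter Set Topology

noncomputable section

/-- `F` is regularly varying at infinity with exponent `β`; slowly varying
means regularly varying with exponent `0`. -/
def RegVary (F : ℝ → ℝ) (β : ℝ) : Prop :=
  ∀ l : ℝ, 0 < l → Tendsto (fun t => F (l * t) / F t) atTop (nhds (l ^ β))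

/-- Erickson's Lemma: if `L` is a continuous, strictly increasing, slowly varying
function tending to `∞`, and `a t = L⁻¹ (x · L t)` for a fixed `x ∈ (0,1)`, then
`a t → ∞` and `a t = o(t)` as `t → ∞`. -/
theorem stmt5 (L : ℝ → ℝ)
    (hLpos : ∀ t : ℝ, 0 < t → 0 < L t)
    (hLcont : ContinuousOn L (Set.Ioi 0))
    (hLmono : StrictMonoOn L (Set.Ioi 0))
    (hLtop : Tendsto L atTop atTop)
    (hLsv : RegVary L 0)
    (x : ℝ) (hx : x ∈ Set.Ioo (0:ℝ) 1)
    (a : ℝ → ℝ)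
    (ha : ∀ᶠ t in atTop, 0 < a t ∧ L (a t) = x * L t) :
    Tendsto a atTop atTop ∧ Tendsto (fun t => a t / t) atTop (nhds 0) := by
  obtain ⟨hx0, hx1⟩ := hx
  have hxL : Tendsto (fun t => x * L t) atTop atTop := hLtop.const_mul_atTop hx0
  constructor
  · rw [tendsto_atTop]
    intro M
    have hM' : (0:ℝ) < max M 1 := lt_of_lt_of_le one_pos (le_max_right _ _)
    filter_upwards [ha, hxL.eventually_gt_atTop (L (max M 1))] with t hat hgt
    obtain ⟨hat0, hatL⟩ := hat
    by_contra h
    push_neg at h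
    have h1 : a t < max M 1 := lt_of_lt_of_le h (le_max_left _ _)
    have := hLmono (mem_Ioi.mpr hat0) (mem_Ioi.mpr hM') h1
    rw [hatL] at this
    exact absurd hgt (not_lt.mpr this.le)
  · rw [NormedAddCommGroup.tendsto_nhds_zero]
    intro ε hε
    have h2 : (0:ℝ) < ε / 2 := by positivity
    have hsv := hLsv (ε / 2) h2
    rw [Real.rpow_zero] at hsv
    have hgt : ∀ᶠ t in atTop, x < L (ε / 2 * t) / L t :=
      hsv.eventually_const_lt hx1
    filter_upwards [ha, hgt, eventually_gt_atTop (0:ℝ)] with t hat hgt ht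
    obtain ⟨hat0, hatL⟩ := hat
    have hLt : 0 < L t := hLpos t ht
    have hle : a t ≤ ε / 2 * t := by
      by_contra h
      push_neg at h
      have hεt : 0 < ε / 2 * t := by positivity
      have := hLmono (mem_Ioi.mpr hεt) (mem_Ioi.mpr hat0) h
      rw [hatL] at this
      have : L (ε / 2 * t) / L t < x := (div_lt_iff₀ hLt).mpr this
      exact absurd hgt (not_lt.mpr this.le)
    have hdiv : a t / t ≤ ε / 2 := (div_le_iff₀ ht).mpr (by linarith)
    rw [Real.norm_eq_abs, abs_of_pos (div_pos hat0 ht)]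
    linarith
end
end

section
/- Let (X,𝒜,μ,T) be a conservative ergodic measure preserving dynamical system on a σ-finite measure space. Then every uniformly returning set is a uniform set. -/
open MeasureTheory Filter Set Topology

noncomputable section

variable {X : Type*} [MeasurableSpace X]

/-- `f` is a probability density with respect to `μ`, i.e. an element of `𝒫_μ`. -/
def IsDensity (μ : Measure X) (f : X → ℝ) : Prop :=
  (∀ x, 0 ≤ f x) ∧ Integrable f μ ∧ ∫ x, f x ∂μ = 1

/-- `hatT` is the transfer operator of `T` with respect to `μ`. -/
def IsTransferOp (μ : Measure X) (T : X → X) (hatT : (X → ℝ) → (X → ℝ)) : Prop :=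
  ∀ f : X → ℝ, Integrable f μ → ∀ B : Set X, MeasurableSet B →
    ∫ x in B, hatT f x ∂μ = ∫ x in T ⁻¹' B, f x ∂μ

/-- `A` is a uniform set for `f`: `(1/a_n) ∑_{k<n} T̂^k f → 1` μ-a.e. uniformly on `A`. -/
def UniformFor (μ : Measure X) (hatT : (X → ℝ) → (X → ℝ)) (A : Set X) (f : X → ℝ) : Prop :=
  ∃ a : ℕ → ℝ, (∀ n, 0 < a n) ∧
    ∀ ε : ℝ, 0 < ε → ∀ᶠ n : ℕ in atTop,
      ∀ᵐ x ∂μ, x ∈ A →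
        |(1 / a n) * (∑ k ∈ Finset.range n, (hatT^[k] f) x) - 1| ≤ ε

/-- `A` is a uniformly returning set for `f`: `b_n · T̂^n f → 1` μ-a.e. uniformly on `A`
for some positive increasing sequence `b_n ↑ ∞`. -/
def UniformlyReturningFor (μ : Measure X) (hatT : (X → ℝ) → (X → ℝ))
    (A : Set X) (f : X → ℝ) : Prop :=
  ∃ b : ℕ → ℝ, (∀ n, 0 < b n) ∧ Monotone b ∧ Tendsto b atTop atTop ∧
    ∀ ε : ℝ, 0 < ε → ∀ᶠ n : ℕ in atTop,
      ∀ᵐ x ∂μ, x ∈ A → |b n * (hatT^[n] f) x - 1| ≤ ε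

open scoped ENNReal

section Aux

variable {μ : Measure X} {T : X → X} {hatT : (X → ℝ) → (X → ℝ)}

/-- The transfer operator preserves integrability and total integral 1. -/
lemma transfer_step (hop : IsTransferOp μ T hatT) {h : X → ℝ}
    (hi : Integrable h μ) (h1 : ∫ x, h x ∂μ = 1) :
    Integrable (hatT h) μ ∧ ∫ x, hatT h x ∂μ = 1 := by
  have key := hop h hi Set.univ MeasurableSet.univ
  rw [Set.preimage_univ, setIntegral_univ, setIntegral_univ, h1] at key
  refine ⟨?_, key⟩
  by_contra hni
  rw [integral_undef hni] at key
  norm_num at key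

lemma transfer_iter (hop : IsTransferOp μ T hatT) {h : X → ℝ}
    (hi : Integrable h μ) (h1 : ∫ x, h x ∂μ = 1) (n : ℕ) :
    Integrable (hatT^[n] h) μ ∧ ∫ x, hatT^[n] h x ∂μ = 1 := by
  induction n with
  | zero => exact ⟨hi, h1⟩
  | succ n ih =>
    rw [Function.iterate_succ_apply']
    exact transfer_step hop ih.1 ih.2

lemma transfer_iter_setIntegral (hop : IsTransferOp μ T hatT) (hTm : Measurable T)
    {h : X → ℝ} (hi : Integrable h μ) (h1 : ∫ x, h x ∂μ = 1) :
    ∀ (n : ℕ) {B : Set X}, MeasurableSet B →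
      ∫ x in B, hatT^[n] h x ∂μ = ∫ x in T^[n] ⁻¹' B, h x ∂μ := by
  intro n
  induction n with
  | zero => intro B _; simp
  | succ n ih =>
    intro B hB
    have h2 : ∫ x in B, hatT^[n + 1] h x ∂μ = ∫ x in T ⁻¹' B, hatT^[n] h x ∂μ := by
      rw [Function.iterate_succ_apply']
      exact hop _ (transfer_iter hop hi h1 n).1 B hB
    rw [h2, ih (hTm hB)]
    congr 1
    rw [Function.iterate_succ']
    rw [Set.preimage_comp]

lemma transfer_iter_nonneg [SigmaFinite μ] (hop : IsTransferOp μ T hatT) (hTm : Measurable T)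
    {h : X → ℝ} (hi : Integrable h μ) (h1 : ∫ x, h x ∂μ = 1) (hpos : 0 ≤ᵐ[μ] h) (n : ℕ) :
    0 ≤ᵐ[μ] hatT^[n] h := by
  induction n with
  | zero => exact hpos
  | succ n ih =>
    rw [Function.iterate_succ_apply']
    refine ae_nonneg_of_forall_setIntegral_nonneg (transfer_step hop
      (transfer_iter hop hi h1 n).1 (transfer_iter hop hi h1 n).2).1 (fun s hs _ => ?_)
    rw [hop _ (transfer_iter hop hi h1 n).1 s hs]
    exact setIntegral_nonneg_of_ae_restrict (ae_restrict_of_ae ih)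

lemma transfer_iter_congr [SigmaFinite μ] (hop : IsTransferOp μ T hatT)
    {h₁ h₂ : X → ℝ} (hi₁ : Integrable h₁ μ) (hi₂ : Integrable h₂ μ)
    (h1₁ : ∫ x, h₁ x ∂μ = 1) (h1₂ : ∫ x, h₂ x ∂μ = 1)
    (heq : h₁ =ᵐ[μ] h₂) (n : ℕ) : hatT^[n] h₁ =ᵐ[μ] hatT^[n] h₂ := by
  induction n with
  | zero => exact heq
  | succ n ih =>
    rw [Function.iterate_succ_apply', Function.iterate_succ_apply']
    refine ae_eq_of_forall_setIntegral_eq_of_sigmaFinite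
      (fun s _ _ => (transfer_step hop (transfer_iter hop hi₁ h1₁ n).1
        (transfer_iter hop hi₁ h1₁ n).2).1.integrableOn)
      (fun s _ _ => (transfer_step hop (transfer_iter hop hi₂ h1₂ n).1
        (transfer_iter hop hi₂ h1₂ n).2).1.integrableOn)
      (fun s hs _ => ?_)
    rw [hop _ (transfer_iter hop hi₁ h1₁ n).1 s hs, hop _ (transfer_iter hop hi₂ h1₂ n).1 s hs]
    exact integral_congr_ae (ae_restrict_of_ae ih)

/-- In a conservative ergodic system, a.e. point visits a set of positive measure
infinitely often. -/
lemma ae_frequently_mem (hc : Conservative T μ) (he : Ergodic T μ)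
    {A : Set X} (hA : MeasurableSet A) (h0 : 0 < μ A) :
    ∀ᵐ x ∂μ, ∃ᶠ n in atTop, T^[n] x ∈ A := by
  have hTm : Measurable T := he.measurable
  set C : Set X := ⋂ N : ℕ, ⋃ n : ℕ, ⋃ _ : N ≤ n, T^[n] ⁻¹' A with hC
  have hmemC : ∀ x, x ∈ C ↔ ∃ᶠ n in atTop, T^[n] x ∈ A := by
    intro x
    simp [hC, frequently_atTop, Set.mem_iInter, Set.mem_iUnion]
  have hCmeas : MeasurableSet C := by
    refine MeasurableSet.iInter fun N => MeasurableSet.iUnion fun n => MeasurableSet.iUnion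
      fun _ => (hTm.iterate n) hA
  have hinv : T ⁻¹' C = C := by
    ext x
    simp only [Set.mem_preimage, hmemC, frequently_atTop]
    constructor
    · intro hx N
      obtain ⟨n, hn, hmem⟩ := hx N
      refine ⟨n + 1, hn.trans (Nat.le_succ n), ?_⟩
      rwa [Function.iterate_succ_apply]
    · intro hx N
      obtain ⟨n, hn, hmem⟩ := hx (N + 1)
      obtain ⟨m, rfl⟩ := Nat.exists_eq_add_of_le (Nat.one_le_iff_ne_zero.2
        (by omega) : 1 ≤ n)
      refine ⟨m, by omega, ?_⟩
      rw [← Function.iterate_succ_apply]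
      simpa [Nat.add_comm] using hmem
    -- careful with 1 + m vs m + 1
  have hdich := he.toPreErgodic.measure_self_or_compl_eq_zero hCmeas hinv
  have hAC : ∀ᵐ x ∂μ, x ∈ A → x ∈ C := by
    filter_upwards [hc.ae_mem_imp_frequently_image_mem hA.nullMeasurableSet] with x hx hxA
    exact (hmemC x).2 (hx hxA)
  rcases hdich with hzero | hfull
  · exfalso
    have : μ A ≤ μ (A \ C) + μ C := by
      refine le_trans (measure_mono ?_) (measure_union_le _ _)
      intro x hx; by_cases hxC : x ∈ C
      · exact Or.inr hxC
      · exact Or.inl ⟨hx, hxC⟩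
    have hAdiff : μ (A \ C) = 0 := by
      refine measure_eq_zero_iff_ae_notMem.2 ?_
      filter_upwards [hAC] with x hx
      rintro ⟨hxA, hxC⟩; exact hxC (hx hxA)
    rw [hAdiff, hzero, add_zero] at this
    exact absurd this (not_le.2 h0)
  · have : ∀ᵐ x ∂μ, x ∈ C := by
      rw [ae_iff]
      exact hfull
    filter_upwards [this] with x hx
    exact (hmemC x).1 hx

/-- If `T̂^n g ≤ 2 / c n` a.e. on a set of positive finite measure, then `∑ 1 / c n = ∞`. -/
lemma not_summable_of_bound [SigmaFinite μ] (hop : IsTransferOp μ T hatT)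
    (hc : Conservative T μ) (he : Ergodic T μ)
    {A : Set X} (hA : MeasurableSet A) (h0 : 0 < μ A) (h1 : μ A < ⊤)
    {g : X → ℝ} (hgi : Integrable g μ) (hg1 : ∫ x, g x ∂μ = 1) (hgpos : 0 ≤ᵐ[μ] g)
    {c : ℕ → ℝ} (hcpos : ∀ n, 0 < c n)
    (hbound : ∀ n, ∀ᵐ x ∂μ, x ∈ A → hatT^[n] g x ≤ 2 / c n) :
    ¬ Summable (fun n : ℕ => 1 / c n) := by
  intro hsum
  have hTm : Measurable T := he.measurable
  set F : X → ℝ≥0∞ := fun x => ENNReal.ofReal (g x) with hF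
  have hFmeas : AEMeasurable F μ := hgi.aemeasurable.ennreal_ofReal
  -- each term of the series is bounded
  have hterm : ∀ n : ℕ, ∫⁻ x in T^[n] ⁻¹' A, F x ∂μ
      ≤ ENNReal.ofReal ((μ A).toReal * (2 / c n)) := by
    intro n
    have hint : ∫ x in T^[n] ⁻¹' A, g x ∂μ = ∫ x in A, hatT^[n] g x ∂μ :=
      (transfer_iter_setIntegral hop hTm hgi hg1 n hA).symm
    have hle : ∫ x in A, hatT^[n] g x ∂μ ≤ (μ A).toReal * (2 / c n) := by
      have hb : (fun x => hatT^[n] g x) ≤ᵐ[μ.restrict A] fun _ => 2 / c n := by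
        filter_upwards [ae_restrict_of_ae (hbound n), ae_restrict_mem hA] with x hx hxA
        exact hx hxA
      calc ∫ x in A, hatT^[n] g x ∂μ ≤ ∫ _ in A, (2 / c n) ∂μ :=
            setIntegral_mono_ae_restrict (transfer_iter hop hgi hg1 n).1.integrableOn
              (integrableOn_const h1.ne) hb
        _ = (μ A).toReal * (2 / c n) := by rw [setIntegral_const, smul_eq_mul]; rfl
    have heq : ∫⁻ x in T^[n] ⁻¹' A, F x ∂μ = ENNReal.ofReal (∫ x in T^[n] ⁻¹' A, g x ∂μ) :=
      (ofReal_integral_eq_lintegral_ofReal hgi.integrableOn (ae_restrict_of_ae hgpos)).symm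
    rw [heq, hint]
    exact ENNReal.ofReal_le_ofReal hle
  -- hence the total series is finite
  have hsum2 : Summable (fun n : ℕ => (μ A).toReal * (2 / c n)) := by
    have heq2 : (fun n : ℕ => (μ A).toReal * (2 / c n))
        = fun n : ℕ => ((μ A).toReal * 2) * (1 / c n) := by
      funext n; ring
    rw [heq2]; exact hsum.mul_left _
  have hfin : ∑' n : ℕ, ∫⁻ x in T^[n] ⁻¹' A, F x ∂μ < ⊤ := by
    calc ∑' n : ℕ, ∫⁻ x in T^[n] ⁻¹' A, F x ∂μ
        ≤ ∑' n : ℕ, ENNReal.ofReal ((μ A).toReal * (2 / c n)) := ENNReal.tsum_le_tsum hterm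
      _ = ENNReal.ofReal (∑' n : ℕ, (μ A).toReal * (2 / c n)) :=
          (ENNReal.ofReal_tsum_of_nonneg (fun n => mul_nonneg ENNReal.toReal_nonneg (le_of_lt (div_pos two_pos (hcpos n)))) hsum2).symm
      _ < ⊤ := ENNReal.ofReal_lt_top
  -- rewrite the series as a single integral
  have htsum : ∑' n : ℕ, ∫⁻ x in T^[n] ⁻¹' A, F x ∂μ
      = ∫⁻ x, ∑' n : ℕ, (T^[n] ⁻¹' A).indicator F x ∂μ := by
    rw [lintegral_tsum (fun n => hFmeas.indicator ((hTm.iterate n) hA))]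
    congr 1; funext n
    exact (lintegral_indicator ((hTm.iterate n) hA) F).symm
  -- the integral is infinite
  obtain ⟨gm, hgm_meas, hgm_eq⟩ := hgi.aemeasurable
  set Spos : Set X := gm ⁻¹' ({0}ᶜ) with hSpos
  have hSmeas : MeasurableSet Spos := hgm_meas (measurableSet_singleton 0).compl
  have hSne : μ Spos ≠ 0 := by
    intro hz
    have hgm0 : gm =ᵐ[μ] 0 := by
      rw [Filter.EventuallyEq, ae_iff]
      simpa [hSpos, Set.preimage, Set.compl] using hz
    have : ∫ x, g x ∂μ = 0 := by
      rw [integral_congr_ae (hgm_eq.trans hgm0)]; simp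
    rw [hg1] at this; norm_num at this
  have hfreq := ae_frequently_mem hc he hA h0
  have hlow : ∀ᵐ x ∂μ, Spos.indicator (fun _ => (⊤ : ℝ≥0∞)) x
      ≤ ∑' n : ℕ, (T^[n] ⁻¹' A).indicator F x := by
    filter_upwards [hfreq, hgm_eq, hgpos] with x hx hxe hxpos
    by_cases hxS : x ∈ Spos
    · rw [Set.indicator_of_mem hxS]
      have hgx : 0 < g x := by
        have hxpos' : (0 : ℝ) ≤ g x := hxpos
        rcases lt_or_eq_of_le hxpos' with hlt | heq0
        · exact hlt
        · exact absurd (show gm x = 0 by rw [← hxe, ← heq0]) hxS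
      have hFx : F x ≠ 0 := by
        simp only [hF, ne_eq, ENNReal.ofReal_eq_zero, not_le]
        exact hgx
      have hinfS : {n : ℕ | T^[n] x ∈ A}.Infinite :=
        Nat.frequently_atTop_iff_infinite.1 hx
      haveI := hinfS.to_subtype
      calc (⊤ : ℝ≥0∞) = ∑' _ : {n : ℕ | T^[n] x ∈ A}, F x :=
            (ENNReal.tsum_const_eq_top_of_ne_zero hFx).symm
        _ = ∑' n : ℕ, {n : ℕ | T^[n] x ∈ A}.indicator (fun _ => F x) n :=
            tsum_subtype {n : ℕ | T^[n] x ∈ A} (fun _ => F x)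
        _ ≤ ∑' n : ℕ, (T^[n] ⁻¹' A).indicator F x := by
            refine ENNReal.tsum_le_tsum (fun n => ?_)
            by_cases hn : T^[n] x ∈ A
            · rw [Set.indicator_of_mem (by exact hn), Set.indicator_of_mem (by exact hn)]
            · rw [Set.indicator_of_notMem (by exact hn)]
              exact zero_le
    · rw [Set.indicator_of_notMem hxS]
      exact zero_le
  have hinf2 : ∫⁻ x, ∑' n : ℕ, (T^[n] ⁻¹' A).indicator F x ∂μ = ⊤ := by
    refine top_le_iff.1 ?_
    calc (⊤ : ℝ≥0∞) = ⊤ * μ Spos := (ENNReal.top_mul hSne).symm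
      _ = ∫⁻ x in Spos, ⊤ ∂μ := (setLIntegral_const Spos ⊤).symm
      _ = ∫⁻ x, Spos.indicator (fun _ => (⊤ : ℝ≥0∞)) x ∂μ :=
          (lintegral_indicator hSmeas _).symm
      _ ≤ _ := lintegral_mono_ae hlow
  rw [htsum, hinf2] at hfin
  exact absurd hfin (lt_irrefl _)

end Aux

/-- Any uniformly returning set is uniform. -/
theorem stmt10 (μ : Measure X) [SigmaFinite μ] (hinf : μ Set.univ = ⊤)
    (T : X → X) (hT : MeasurePreserving T μ μ) (hc : Conservative T μ)
    (he : Ergodic T μ)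
    (hatT : (X → ℝ) → (X → ℝ)) (hop : IsTransferOp μ T hatT)
    (A : Set X) (hA : MeasurableSet A) (h0 : 0 < μ A) (h1 : μ A < ⊤)
    (f : X → ℝ) (hf : IsDensity μ f)
    (hur : UniformlyReturningFor μ hatT A f) :
    ∃ g : X → ℝ, IsDensity μ g ∧ UniformFor μ hatT A g := by
  obtain ⟨hfpos, hfi, hf1⟩ := hf
  have hTm : Measurable T := hT.measurable
  obtain ⟨b, hbpos, hbmono, hbtop, hbconv⟩ := hur
  obtain ⟨N1, hN1⟩ := eventually_atTop.1 (hbconv 1 one_pos)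
  set g0 : X → ℝ := hatT^[N1] f with hg0
  have hg0i : Integrable g0 μ := (transfer_iter hop hfi hf1 N1).1
  have hg01 : ∫ x, g0 x ∂μ = 1 := (transfer_iter hop hfi hf1 N1).2
  have hg0pos : 0 ≤ᵐ[μ] g0 :=
    transfer_iter_nonneg hop hTm hfi hf1 (Eventually.of_forall hfpos) N1
  set g : X → ℝ := fun x => max (g0 x) 0 with hg
  have hgg0 : g =ᵐ[μ] g0 := by
    filter_upwards [hg0pos] with x hx
    simp only [hg]
    exact max_eq_left hx
  have hgi : Integrable g μ := hg0i.congr hgg0.symm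
  have hg1 : ∫ x, g x ∂μ = 1 := by rw [integral_congr_ae hgg0, hg01]
  have hgd : IsDensity μ g := ⟨fun x => le_max_right _ _, hgi, hg1⟩
  -- key identification of iterates
  have hiter : ∀ n : ℕ, hatT^[n] g =ᵐ[μ] hatT^[n + N1] f := by
    intro n
    have h1' : hatT^[n] g =ᵐ[μ] hatT^[n] g0 :=
      transfer_iter_congr hop hgi hg0i hg1 hg01 hgg0 n
    have h2' : hatT^[n] g0 = hatT^[n + N1] f := by
      rw [hg0, ← Function.iterate_add_apply]
    exact h1'.trans (by rw [h2'])
  set c : ℕ → ℝ := fun n => b (n + N1) with hcdef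
  have hcpos : ∀ n, 0 < c n := fun n => hbpos _
  -- crude uniform bound valid for all n
  have hball : ∀ n : ℕ, ∀ᵐ x ∂μ, x ∈ A → |c n * hatT^[n] g x - 1| ≤ 1 := by
    intro n
    filter_upwards [hN1 (n + N1) (Nat.le_add_left _ _), hiter n] with x hx hxe hxA
    rw [hxe]
    exact hx hxA
  have hbound : ∀ n : ℕ, ∀ᵐ x ∂μ, x ∈ A → hatT^[n] g x ≤ 2 / c n := by
    intro n
    filter_upwards [hball n] with x hx hxA
    have h2 := (abs_le.1 (hx hxA)).2
    rw [le_div_iff₀ (hcpos n)]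
    nlinarith [hcpos n]
  have hnots : ¬ Summable (fun n : ℕ => 1 / c n) :=
    not_summable_of_bound hop hc he hA h0 h1 hgi hg1
      (Eventually.of_forall fun x => le_max_right _ _) hcpos hbound
  set S : ℕ → ℝ := fun n => ∑ k ∈ Finset.range n, 1 / c k with hSdef
  have hStop : Tendsto S atTop atTop :=
    (not_summable_iff_tendsto_nat_atTop_of_nonneg
      (fun n => le_of_lt (one_div_pos.2 (hcpos n)))).1 hnots
  set a : ℕ → ℝ := fun n => if n = 0 then 1 else S n with hadef
  have hapos : ∀ n, 0 < a n := by
    intro n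
    by_cases hn : n = 0
    · simp [hadef, hn]
    · simp only [hadef, if_neg hn]
      exact Finset.sum_pos (fun k _ => one_div_pos.2 (hcpos k)) (Finset.nonempty_range_iff.2 hn)
  refine ⟨g, hgd, a, hapos, ?_⟩
  intro ε hε
  have hε2 : 0 < ε / 2 := by linarith
  obtain ⟨M0, hM0⟩ := eventually_atTop.1 (hbconv (ε / 2) hε2)
  -- a.e. statements, combined over all indices
  have hAE1 : ∀ᵐ x ∂μ, ∀ k : ℕ, x ∈ A → |c k * hatT^[k] g x - 1| ≤ 1 := ae_all_iff.2 hball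
  have hAE2 : ∀ᵐ x ∂μ, ∀ k : ℕ, M0 ≤ k → x ∈ A → |c k * hatT^[k] g x - 1| ≤ ε / 2 := by
    refine ae_all_iff.2 (fun k => ?_)
    by_cases hk : M0 ≤ k
    · filter_upwards [hM0 (k + N1) (le_trans hk (Nat.le_add_right _ _)), hiter k]
        with x hx hxe _ hxA
      rw [hxe]
      exact hx hxA
    · filter_upwards with x hk' hxA
      exact absurd hk' hk
  -- eventual conditions on n
  have hev : ∀ᶠ n : ℕ in atTop, M0 ≤ n ∧ 1 ≤ n ∧ S M0 ≤ (ε / 2) * S n := by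
    filter_upwards [eventually_ge_atTop M0, eventually_ge_atTop 1,
      hStop.eventually_ge_atTop (S M0 / (ε / 2))] with n hn1 hn2 hn3
    refine ⟨hn1, hn2, ?_⟩
    rw [div_le_iff₀ hε2] at hn3
    linarith
  filter_upwards [hev] with n hn
  obtain ⟨hnM, hn1, hnS⟩ := hn
  filter_upwards [hAE1, hAE2] with x hx1 hx2 hxA
  have hSn : 0 < S n :=
    Finset.sum_pos (fun k _ => one_div_pos.2 (hcpos k)) (Finset.nonempty_range_iff.2 (by omega))
  have han : a n = S n := if_neg (by omega)
  -- pointwise estimates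
  have habs : ∀ (k : ℕ), |hatT^[k] g x - 1 / c k| = |c k * hatT^[k] g x - 1| / c k := by
    intro k
    have hck := hcpos k
    have hfact : c k * hatT^[k] g x - 1 = c k * (hatT^[k] g x - 1 / c k) := by
      field_simp
    rw [hfact, abs_mul, abs_of_pos hck, mul_comm, mul_div_assoc,
      div_self (ne_of_gt hck), mul_one]
  have hsum_bound : |(∑ k ∈ Finset.range n, hatT^[k] g x) - S n| ≤ S M0 + (ε / 2) * S n := by
    have hdiff : (∑ k ∈ Finset.range n, hatT^[k] g x) - S n
        = ∑ k ∈ Finset.range n, (hatT^[k] g x - 1 / c k) := by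
      rw [hSdef, ← Finset.sum_sub_distrib]
    rw [hdiff]
    have hIco : ∑ k ∈ Finset.Ico M0 n, (1 : ℝ) / c k ≤ S n := by
      have := Finset.sum_range_add_sum_Ico (fun k => (1 : ℝ) / c k) hnM
      have hnn : (0 : ℝ) ≤ ∑ k ∈ Finset.range M0, 1 / c k :=
        Finset.sum_nonneg (fun k _ => le_of_lt (one_div_pos.2 (hcpos k)))
      simp only [hSdef]
      linarith
    calc |∑ k ∈ Finset.range n, (hatT^[k] g x - 1 / c k)|
        ≤ ∑ k ∈ Finset.range n, |hatT^[k] g x - 1 / c k| := Finset.abs_sum_le_sum_abs _ _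
      _ = (∑ k ∈ Finset.range M0, |hatT^[k] g x - 1 / c k|)
          + ∑ k ∈ Finset.Ico M0 n, |hatT^[k] g x - 1 / c k| :=
          (Finset.sum_range_add_sum_Ico _ hnM).symm
      _ ≤ S M0 + (ε / 2) * S n := by
          refine add_le_add ?_ ?_
          · calc ∑ k ∈ Finset.range M0, |hatT^[k] g x - 1 / c k|
                ≤ ∑ k ∈ Finset.range M0, 1 / c k := by
                  refine Finset.sum_le_sum (fun k _ => ?_)
                  rw [habs k]
                  exact (div_le_div_iff_of_pos_right (hcpos k)).2 (hx1 k hxA)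
              _ = S M0 := by rw [hSdef]
          · calc ∑ k ∈ Finset.Ico M0 n, |hatT^[k] g x - 1 / c k|
                ≤ ∑ k ∈ Finset.Ico M0 n, (ε / 2) * (1 / c k) := by
                  refine Finset.sum_le_sum (fun k hk => ?_)
                  rw [habs k, mul_one_div]
                  exact (div_le_div_iff_of_pos_right (hcpos k)).2 (hx2 k (Finset.mem_Ico.1 hk).1 hxA)
              _ = (ε / 2) * ∑ k ∈ Finset.Ico M0 n, (1 / c k) := by
                  rw [Finset.mul_sum]
              _ ≤ (ε / 2) * S n := mul_le_mul_of_nonneg_left hIco (le_of_lt hε2)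
  rw [han]
  have hSne : S n ≠ 0 := ne_of_gt hSn
  have hrw : (1 / S n) * (∑ k ∈ Finset.range n, (hatT^[k] g) x) - 1
      = ((∑ k ∈ Finset.range n, (hatT^[k] g) x) - S n) / S n := by
    field_simp
  rw [hrw, abs_div, abs_of_pos hSn, div_le_iff₀ hSn]
  calc |(∑ k ∈ Finset.range n, (hatT^[k] g) x) - S n|
      ≤ S M0 + (ε / 2) * S n := hsum_bound
    _ ≤ (ε / 2) * S n + (ε / 2) * S n := by linarith
    _ = ε * S n := by ring
end
end

section
/- Let T be a conservative ergodic measure preserving transformation of an infinite σ-finite measure space, A a set of finite positive measure with wandering rate W_n, and define the normalized spent time Kac process Ψ_n := (Σ_{k=0}^{n−Z_n} μ(A ∩ {φ > k}))/W_n. Then Ψ_n ∘ T − Ψ_n → 0 locally in measure with respect to μ. -/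
open MeasureTheory Filter Set Topology
open scoped Classical ENNReal

noncomputable section

variable {X : Type*} [MeasurableSpace X]

/-- First return time of `x` to `A` under `T` (`∞` if the orbit never returns). -/
def phi (T : X → X) (A : Set X) (x : X) : ℕ∞ :=
  sInf ((fun m : ℕ => (m : ℕ∞)) '' {m : ℕ | 1 ≤ m ∧ T^[m] x ∈ A})

/-- `Z n x` is the time of the last visit of the orbit of `x` to `A` up to time `n`. -/
def Z (T : X → X) (A : Set X) (n : ℕ) (x : X) : ℕ :=
  if ∃ k ≤ n, T^[k] x ∈ A then sSup {k : ℕ | k ≤ n ∧ T^[k] x ∈ A} else 0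

/-- Wandering rate `W_n(A) = ∑_{k=0}^n μ(A ∩ {φ > k})`. -/
def W (μ : Measure X) (T : X → X) (A : Set X) (n : ℕ) : ℝ :=
  ∑ k ∈ Finset.range (n + 1), (μ (A ∩ {y | (k : ℕ∞) < phi T A y})).toReal

/-- The normalized spent time Kac process
`Ψ_n = (∑_{k=0}^{n−Z_n} μ(A ∩ {φ > k})) / W_n`. -/
def KacPsi (μ : Measure X) (T : X → X) (A : Set X) (n : ℕ) (x : X) : ℝ :=
  (∑ k ∈ Finset.range (n - Z T A n x + 1),
      (μ (A ∩ {y | (k : ℕ∞) < phi T A y})).toReal) / W μ T A n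

/-! ### Auxiliary definitions -/

/-- The set `A ∩ {φ > k}`. -/
def AkS (T : X → X) (A : Set X) (k : ℕ) : Set X :=
  A ∩ {y | (k : ℕ∞) < phi T A y}

/-- `a_k = μ(A ∩ {φ > k})`. -/
def ak (μ : Measure X) (T : X → X) (A : Set X) (k : ℕ) : ℝ≥0∞ :=
  μ (AkS T A k)

/-- Partial sums `S_m = ∑_{k<m} a_k`. -/
def Sp (μ : Measure X) (T : X → X) (A : Set X) (m : ℕ) : ℝ :=
  ∑ k ∈ Finset.range m, (μ (A ∩ {y | (k : ℕ∞) < phi T A y})).toReal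

/-- Points whose orbit first hits `A` exactly at time `m`. -/
def Dset (T : X → X) (A : Set X) (m : ℕ) : Set X :=
  {y | (∀ i < m, T^[i] y ∉ A) ∧ T^[m] y ∈ A}

section aux

variable {μ : Measure X} {T : X → X} {A : Set X}

/-! ### Basic facts about `phi` -/

lemma phi_gt_iff {y : X} {k : ℕ} :
    (k : ℕ∞) < phi T A y ↔ ∀ m : ℕ, 1 ≤ m → m ≤ k → T^[m] y ∉ A := by
  constructor
  · intro h m h1 hk hm
    have h2 : phi T A y ≤ (m : ℕ∞) := sInf_le ⟨m, ⟨h1, hm⟩, rfl⟩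
    have h3 : (k : ℕ∞) < (m : ℕ∞) := lt_of_lt_of_le h h2
    have : k < m := by exact_mod_cast h3
    omega
  · intro h
    have h4 : ((k + 1 : ℕ) : ℕ∞) ≤ phi T A y := by
      apply le_sInf
      rintro a ⟨m, ⟨h1, hm⟩, rfl⟩
      have hkm : k < m := by
        by_contra hc
        exact h m h1 (by omega) hm
      show ((k + 1 : ℕ) : ℕ∞) ≤ (m : ℕ∞)
      exact_mod_cast hkm
    refine lt_of_lt_of_le ?_ h4
    exact_mod_cast Nat.lt_succ_self k

lemma phi_pos (y : X) : (0 : ℕ∞) < phi T A y := by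
  have h := (phi_gt_iff (T := T) (A := A) (y := y) (k := 0)).2 (by intro m h1 h0; omega)
  simpa using h

lemma measurable_phiGt (hTm : Measurable T) (hA : MeasurableSet A) (k : ℕ) :
    MeasurableSet {y : X | (k : ℕ∞) < phi T A y} := by
  have hset : {y : X | (k : ℕ∞) < phi T A y} = ⋂ m ∈ Set.Icc 1 k, (T^[m]) ⁻¹' Aᶜ := by
    ext y
    simp only [mem_setOf_eq, mem_iInter, mem_Icc, mem_preimage, mem_compl_iff, phi_gt_iff,
      and_imp]
  rw [hset]
  exact MeasurableSet.biInter (Set.to_countable _)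
    fun m _ => hA.compl.preimage (hTm.iterate m)

lemma measurable_AkS (hTm : Measurable T) (hA : MeasurableSet A) (k : ℕ) :
    MeasurableSet (AkS T A k) :=
  hA.inter (measurable_phiGt hTm hA k)

lemma AkS_zero : AkS T A 0 = A := by
  apply inter_eq_self_of_subset_left
  intro y _
  simpa using phi_pos (T := T) (A := A) y

lemma AkS_antitone : Antitone (AkS T A) := by
  intro k l hkl
  apply inter_subset_inter_right
  intro y hy
  exact lt_of_le_of_lt (show (k : ℕ∞) ≤ (l : ℕ∞) by exact_mod_cast hkl) hy

lemma ak_le : ak μ T A k ≤ μ A := measure_mono inter_subset_left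

lemma ak_lt_top (h1 : μ A < ⊤) (k : ℕ) : ak μ T A k < ⊤ := lt_of_le_of_lt ak_le h1

lemma ak_anti : Antitone (ak μ T A) := fun _ _ h => measure_mono (AkS_antitone h)

lemma ak_zero : ak μ T A 0 = μ A := by rw [ak, AkS_zero]

lemma ak_tendsto (hTm : Measurable T) (hc : Conservative T μ) (hA : MeasurableSet A)
    (h1 : μ A < ⊤) : Tendsto (ak μ T A) atTop (𝓝 0) := by
  have h := tendsto_measure_iInter_atTop (μ := μ) (s := AkS T A)
    (fun k => (measurable_AkS hTm hA k).nullMeasurableSet) AkS_antitone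
    ⟨0, by rw [AkS_zero]; exact h1.ne⟩
  have hset : (⋂ k, AkS T A k) = {x | x ∈ A ∧ ∀ m, m ≥ 1 → T^[m] x ∉ A} := by
    ext x
    simp only [mem_iInter, AkS, mem_inter_iff, mem_setOf_eq, phi_gt_iff, ge_iff_le]
    constructor
    · intro hx
      exact ⟨(hx 0).1, fun m hm => (hx m).2 m hm le_rfl⟩
    · rintro ⟨hxA, hx⟩ k
      exact ⟨hxA, fun m hm _ => hx m hm⟩
  rw [hset] at h
  have hz : μ {x | x ∈ A ∧ ∀ m, m ≥ 1 → T^[m] x ∉ A} = 0 := by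
    have h2 := hc.measure_mem_forall_ge_image_notMem_eq_zero hA.nullMeasurableSet 1
    convert h2 using 2
  rw [hz] at h
  exact h

/-! ### Facts about `Sp` and `W` -/

lemma Sp_eq (m : ℕ) : Sp μ T A m = ∑ k ∈ Finset.range m, (ak μ T A k).toReal := rfl

lemma W_eq (n : ℕ) : W μ T A n = Sp μ T A (n + 1) := rfl

lemma KacPsi_eq (n : ℕ) (x : X) :
    KacPsi μ T A n x = Sp μ T A (n - Z T A n x + 1) / W μ T A n := rfl

lemma Sp_nonneg (m : ℕ) : 0 ≤ Sp μ T A m :=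
  Finset.sum_nonneg fun _ _ => ENNReal.toReal_nonneg

lemma Sp_mono : Monotone (Sp μ T A) := fun _ _ h =>
  Finset.sum_le_sum_of_subset_of_nonneg (Finset.range_subset_range.2 h)
    fun _ _ _ => ENNReal.toReal_nonneg

lemma Sp_succ (m : ℕ) : Sp μ T A (m + 1) = Sp μ T A m + (ak μ T A m).toReal :=
  Finset.sum_range_succ _ _

lemma Sp_one : Sp μ T A 1 = (μ A).toReal := by
  rw [Sp_eq, Finset.sum_range_one, ak_zero]

lemma W_pos (h0 : 0 < μ A) (h1 : μ A < ⊤) (n : ℕ) : 0 < W μ T A n := by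
  have h2 : (ak μ T A 0).toReal ≤ W μ T A n := by
    rw [W_eq, Sp_eq]
    exact Finset.single_le_sum (f := fun k => (ak μ T A k).toReal)
      (fun i _ => ENNReal.toReal_nonneg) (Finset.mem_range.2 (Nat.succ_pos n))
  rw [ak_zero] at h2
  exact lt_of_lt_of_le (ENNReal.toReal_pos h0.ne' h1.ne) h2

/-! ### Facts about `Z` -/

lemma Z_le (n : ℕ) (x : X) : Z T A n x ≤ n := by
  unfold Z
  split_ifs with h
  · obtain ⟨k, hk, hkA⟩ := h
    refine csSup_le ⟨k, ?_⟩ fun b hb => hb.1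
    exact ⟨hk, hkA⟩
  · exact Nat.zero_le n

lemma Z_mem {n : ℕ} {x : X} (h : ∃ k ≤ n, T^[k] x ∈ A) : T^[Z T A n x] x ∈ A := by
  unfold Z; rw [if_pos h]
  obtain ⟨k, hk, hkA⟩ := h
  have hmem := Nat.sSup_mem (s := {k : ℕ | k ≤ n ∧ T^[k] x ∈ A})
    ⟨k, ⟨hk, hkA⟩⟩ ⟨n, fun b hb => hb.1⟩
  exact hmem.2

lemma Z_not_visit {n : ℕ} {x : X} {j : ℕ} (hj : Z T A n x < j) (hjn : j ≤ n) :
    T^[j] x ∉ A := by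
  intro hA'
  have h : ∃ k ≤ n, T^[k] x ∈ A := ⟨j, hjn, hA'⟩
  have h2 : j ≤ Z T A n x := by
    unfold Z; rw [if_pos h]
    exact le_csSup ⟨n, fun b hb => hb.1⟩ ⟨hjn, hA'⟩
  omega

lemma Z_top {n : ℕ} {x : X} (hlast : T^[n + 1] x ∈ A) : Z T A n (T x) = n := by
  have hmem : T^[n] (T x) ∈ A := by rw [← Function.iterate_succ_apply]; exact hlast
  have h : ∃ k ≤ n, T^[k] (T x) ∈ A := ⟨n, le_rfl, hmem⟩
  have h2 : n ≤ Z T A n (T x) := by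
    unfold Z; rw [if_pos h]
    exact le_csSup ⟨n, fun b hb => hb.1⟩ ⟨le_rfl, hmem⟩
  have h3 := Z_le (T := T) (A := A) n (T x)
  omega

lemma Z_mid {n : ℕ} {x : X} (hv : ∃ k, 1 ≤ k ∧ k ≤ n ∧ T^[k] x ∈ A)
    (hlast : T^[n + 1] x ∉ A) :
    1 ≤ Z T A n x ∧ Z T A n (T x) + 1 = Z T A n x := by
  obtain ⟨k, hk1, hkn, hkA⟩ := hv
  have hex : ∃ j ≤ n, T^[j] x ∈ A := ⟨k, hkn, hkA⟩
  have hLmem : T^[Z T A n x] x ∈ A := Z_mem hex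
  have hLn : Z T A n x ≤ n := Z_le n x
  have hkL : k ≤ Z T A n x := by
    unfold Z; rw [if_pos hex]
    exact le_csSup ⟨n, fun b hb => hb.1⟩ ⟨hkn, hkA⟩
  have hL1 : 1 ≤ Z T A n x := le_trans hk1 hkL
  have hmem' : T^[Z T A n x - 1] (T x) ∈ A := by
    have h5 : Z T A n x - 1 + 1 = Z T A n x := by omega
    have h6 := hLmem
    rw [← h5, Function.iterate_succ_apply] at h6
    exact h6
  have hex' : ∃ j ≤ n, T^[j] (T x) ∈ A := ⟨Z T A n x - 1, by omega, hmem'⟩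
  have hub : ∀ b ∈ {j : ℕ | j ≤ n ∧ T^[j] (T x) ∈ A}, b ≤ Z T A n x - 1 := by
    rintro b ⟨hbn, hbA⟩
    have hbA' : T^[b + 1] x ∈ A := by rw [Function.iterate_succ_apply]; exact hbA
    by_contra hb
    rcases Nat.lt_or_ge b n with hbn' | hbn'
    · exact Z_not_visit (n := n) (by omega) (by omega) hbA'
    · have hbn2 : b = n := by omega
      subst hbn2
      exact hlast hbA'
  have hZTx : Z T A n (T x) = Z T A n x - 1 := by
    have h7 : Z T A n (T x) = sSup {j : ℕ | j ≤ n ∧ T^[j] (T x) ∈ A} := by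
      unfold Z; rw [if_pos hex']
    rw [h7]
    apply le_antisymm
    · exact csSup_le ⟨Z T A n x - 1, ⟨by omega, hmem'⟩⟩ hub
    · exact le_csSup ⟨n, fun b hb => hb.1⟩ ⟨by omega, hmem'⟩
  exact ⟨hL1, by omega⟩

lemma Z_none {n : ℕ} {x : X} (hv : ∀ k, 1 ≤ k → k ≤ n + 1 → T^[k] x ∉ A) :
    Z T A n (T x) = 0 ∧ Z T A n x = 0 := by
  constructor
  · unfold Z
    rw [if_neg]
    rintro ⟨j, hjn, hjA⟩
    have h2 : T^[j + 1] x ∈ A := by rw [Function.iterate_succ_apply]; exact hjA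
    exact hv (j + 1) (by omega) (by omega) h2
  · unfold Z
    split_ifs with h
    · refine Nat.le_zero.1 (csSup_le ?_ ?_)
      · obtain ⟨j, hjn, hjA⟩ := h; exact ⟨j, hjn, hjA⟩
      · rintro b ⟨hbn, hbA⟩
        by_contra hb
        exact hv b (by omega) (by omega) hbA
    · rfl

end aux

section aux2

variable {μ : Measure X} {T : X → X} {A : Set X}

lemma abs_sub_le_max' {a b : ℝ} (ha : 0 ≤ a) (hb : 0 ≤ b) : |a - b| ≤ max a b := by
  rcases le_total a b with h | h
  · rw [abs_of_nonpos (by linarith), neg_sub]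
    exact le_max_of_le_right (by linarith)
  · rw [abs_of_nonneg (by linarith)]
    exact le_max_of_le_left (by linarith)

/-! ### The wandering rate tends to infinity -/

lemma W_tendsto (hinf : μ Set.univ = ⊤) (hT : MeasurePreserving T μ μ)
    (hc : Conservative T μ) (he : Ergodic T μ) (hA : MeasurableSet A)
    (h0 : 0 < μ A) (h1 : μ A < ⊤) :
    Tendsto (W μ T A) atTop atTop := by
  have hTm := hT.measurable
  set U : Set X := ⋃ j : ℕ, (T^[j]) ⁻¹' A with hU
  have hUm : MeasurableSet U := MeasurableSet.iUnion fun j => hA.preimage (hTm.iterate j)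
  have hTU : ∀ y : X, T y ∈ U → y ∈ U := by
    intro y hy
    obtain ⟨j, hj⟩ := mem_iUnion.1 hy
    refine mem_iUnion.2 ⟨j + 1, ?_⟩
    simp only [mem_preimage] at hj ⊢
    rw [Function.iterate_succ_apply]
    exact hj
  -- the wandering part `U \ T⁻¹U` is null
  have hW0 : μ (U \ T ⁻¹' U) = 0 := by
    by_contra hne
    obtain ⟨x, hx, m, hm0, hmx⟩ := hc.exists_mem_iterate_mem
      (hUm.diff (hUm.preimage hTm)).nullMeasurableSet hne
    have h5 : T^[m] x ∈ U := hmx.1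
    obtain ⟨j, hj⟩ := mem_iUnion.1 h5
    simp only [mem_preimage] at hj
    have h6 : T^[j + m] x ∈ A := by rw [Function.iterate_add_apply]; exact hj
    have h7 : T^[j + m - 1] (T x) ∈ A := by
      have h8 : j + m - 1 + 1 = j + m := by omega
      have h9 := h6
      rw [← h8, Function.iterate_succ_apply] at h9
      exact h9
    exact hx.2 (mem_iUnion.2 ⟨j + m - 1, h7⟩)
  have hWn : ∀ n : ℕ, μ ((T^[n]) ⁻¹' (U \ T ⁻¹' U)) = 0 := by
    intro n
    rw [(hT.iterate n).measure_preimage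
      (hUm.diff (hUm.preimage hTm)).nullMeasurableSet]
    exact hW0
  have hstep : ∀ n : ℕ, μ (U \ (T^[n]) ⁻¹' U) = 0 := by
    intro n
    induction n with
    | zero => simp
    | succ n ih =>
      have hsub : U \ (T^[n + 1]) ⁻¹' U ⊆
          (U \ (T^[n]) ⁻¹' U) ∪ (T^[n]) ⁻¹' (U \ T ⁻¹' U) := by
        intro x hx
        by_cases h : T^[n] x ∈ U
        · right
          refine ⟨h, fun hx' => hx.2 ?_⟩
          show T^[n + 1] x ∈ U
          rw [Function.iterate_succ_apply']
          exact hx'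
        · exact Or.inl ⟨hx.1, h⟩
      exact measure_mono_null hsub (measure_union_null ih (hWn n))
  set V : Set X := ⋂ n : ℕ, (T^[n]) ⁻¹' U with hV
  have hVm : MeasurableSet V := MeasurableSet.iInter fun n => hUm.preimage (hTm.iterate n)
  have hVsubU : V ⊆ U := by
    intro x hx
    have h9 := mem_iInter.1 hx 0
    simpa using h9
  have hVinv : T ⁻¹' V = V := by
    show T ⁻¹' (⋂ n : ℕ, (T^[n]) ⁻¹' U) = ⋂ n : ℕ, (T^[n]) ⁻¹' U
    ext x
    simp only [mem_preimage, mem_iInter]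
    constructor
    · intro h n
      cases n with
      | zero =>
        simp only [Function.iterate_zero_apply]
        refine hTU x ?_
        have h10 := h 0
        simpa using h10
      | succ n =>
        rw [Function.iterate_succ_apply]
        exact h n
    · intro h n
      rw [← Function.iterate_succ_apply]
      exact h (n + 1)
  have hUV : μ (U \ V) = 0 := by
    have hsub : U \ V ⊆ ⋃ n : ℕ, U \ (T^[n]) ⁻¹' U := by
      rintro x ⟨hxU, hxV⟩
      rw [hV, mem_iInter] at hxV
      push_neg at hxV
      obtain ⟨n, hn⟩ := hxV
      exact mem_iUnion.2 ⟨n, hxU, hn⟩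
    exact measure_mono_null hsub (measure_iUnion_null fun n => hstep n)
  have hAU : A ⊆ U := fun x hx => mem_iUnion.2 ⟨0, by simpa using hx⟩
  have hμU : 0 < μ U := lt_of_lt_of_le h0 (measure_mono hAU)
  have hVpos : μ V ≠ 0 := by
    intro hV0
    have h8 : μ U ≤ μ V + μ (U \ V) := by
      calc μ U = μ (V ∪ U \ V) := by rw [Set.union_diff_cancel hVsubU]
      _ ≤ μ V + μ (U \ V) := measure_union_le _ _
    rw [hV0, hUV, add_zero] at h8
    exact hμU.ne' (le_antisymm h8 (zero_le))
  have hUinf : μ U = ⊤ := by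
    rcases he.toPreErgodic.ae_empty_or_univ hVm hVinv with hVe | hVu
    · exact absurd ((measure_congr hVe).trans measure_empty) hVpos
    · have hUc : μ Uᶜ = 0 :=
        measure_mono_null (compl_subset_compl.2 hVsubU) (ae_eq_univ.1 hVu)
      have h11 : (⊤ : ℝ≥0∞) ≤ μ U := by
        calc (⊤ : ℝ≥0∞) = μ Set.univ := hinf.symm
        _ = μ (U ∪ Uᶜ) := by rw [Set.union_compl_self]
        _ ≤ μ U + μ Uᶜ := measure_union_le _ _
        _ = μ U := by rw [hUc, add_zero]
      exact top_le_iff.1 h11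
  -- finite unions cover
  set bigU : ℕ → Set X := fun n => ⋃ j ∈ Finset.range (n + 1), (T^[j]) ⁻¹' A with hbigU
  have hcover : ∀ n : ℕ, bigU n ⊆ ⋃ j ∈ Finset.range (n + 1), (T^[j]) ⁻¹' (AkS T A (n - j)) := by
    intro n x hx
    simp only [hbigU, mem_iUnion, Finset.mem_range, mem_preimage] at hx ⊢
    obtain ⟨j, hj, hjA⟩ := hx
    have hex : ∃ k ≤ n, T^[k] x ∈ A := ⟨j, by omega, hjA⟩
    have hZn := Z_le (T := T) (A := A) n x
    refine ⟨Z T A n x, by omega, Z_mem hex, ?_⟩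
    show ((n - Z T A n x : ℕ) : ℕ∞) < phi T A (T^[Z T A n x] x)
    rw [phi_gt_iff]
    intro m hm1 hm2 hmA
    rw [← Function.iterate_add_apply] at hmA
    exact Z_not_visit (n := n) (by omega) (by omega) hmA
  set Wen : ℕ → ℝ≥0∞ := fun n => ∑ k ∈ Finset.range (n + 1), ak μ T A k with hWen
  have hWenlt : ∀ n, Wen n < ⊤ := by
    intro n
    rw [hWen]
    exact ENNReal.sum_lt_top.2 fun k _ => ak_lt_top h1 k
  have hWreal : ∀ n, W μ T A n = (Wen n).toReal := by
    intro n
    rw [hWen, ENNReal.toReal_sum fun k _ => (ak_lt_top h1 k).ne]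
    rfl
  have hle : ∀ n : ℕ, μ (bigU n) ≤ Wen n := by
    intro n
    calc μ (bigU n) ≤ μ (⋃ j ∈ Finset.range (n + 1), (T^[j]) ⁻¹' (AkS T A (n - j))) :=
        measure_mono (hcover n)
    _ ≤ ∑ j ∈ Finset.range (n + 1), μ ((T^[j]) ⁻¹' (AkS T A (n - j))) :=
        measure_biUnion_finset_le _ _
    _ = ∑ j ∈ Finset.range (n + 1), ak μ T A (n - j) := by
        refine Finset.sum_congr rfl fun j _ => ?_
        exact (hT.iterate j).measure_preimage
          (measurable_AkS hT.measurable hA (n - j)).nullMeasurableSet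
    _ = Wen n := by
        rw [hWen]
        have h12 := Finset.sum_range_reflect (fun j => ak μ T A j) (n + 1)
        simp only [Nat.add_sub_cancel] at h12
        exact h12
  have hmono : Monotone bigU := by
    intro a b hab x hx
    simp only [hbigU, mem_iUnion, Finset.mem_range] at hx ⊢
    obtain ⟨j, hj, hjA⟩ := hx
    exact ⟨j, by omega, hjA⟩
  have hbigUU : (⋃ n : ℕ, bigU n) = U := by
    ext x
    simp only [hbigU, hU, mem_iUnion, Finset.mem_range]
    constructor
    · rintro ⟨n, j, _, hjA⟩; exact ⟨j, hjA⟩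
    · rintro ⟨j, hjA⟩; exact ⟨j, j, by omega, hjA⟩
  have htendsU : Tendsto (fun n => μ (bigU n)) atTop (𝓝 ⊤) := by
    have h13 := tendsto_measure_iUnion_atTop (μ := μ) hmono
    rw [hbigUU, hUinf] at h13
    exact h13
  rw [tendsto_atTop]
  intro M
  have hevent : ∀ᶠ n in atTop, ENNReal.ofReal M < μ (bigU n) :=
    htendsU.eventually (lt_mem_nhds (show ENNReal.ofReal M < ⊤ from ENNReal.ofReal_lt_top))
  filter_upwards [hevent] with n hn
  have h14 : ENNReal.ofReal M ≤ Wen n := le_trans hn.le (hle n)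
  have h15 : M ≤ (Wen n).toReal := (ENNReal.ofReal_le_iff_le_toReal (hWenlt n).ne).1 h14
  rw [hWreal n]
  exact h15

/-! ### First-hitting-time sets -/

lemma measurable_Dset (hTm : Measurable T) (hA : MeasurableSet A) (m : ℕ) :
    MeasurableSet (Dset T A m) := by
  have hset : Dset T A m = (⋂ i ∈ Set.Iio m, (T^[i]) ⁻¹' Aᶜ) ∩ (T^[m]) ⁻¹' A := by
    ext y
    simp only [Dset, mem_setOf_eq, mem_inter_iff, mem_iInter, mem_Iio, mem_preimage,
      mem_compl_iff]
  rw [hset]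
  exact (MeasurableSet.biInter (Set.to_countable _)
    fun i _ => hA.compl.preimage (hTm.iterate i)).inter (hA.preimage (hTm.iterate m))

lemma Dset_measure (hT : MeasurePreserving T μ μ) (hA : MeasurableSet A)
    (h1 : μ A < ⊤) (m : ℕ) : μ (Dset T A m) = ak μ T A m := by
  have hTm := hT.measurable
  induction m with
  | zero =>
    have hD0 : Dset T A 0 = A := by
      ext y; simp [Dset]
    rw [hD0, ak_zero]
  | succ m ih =>
    have hkey : T ⁻¹' Dset T A m = Dset T A (m + 1) ∪ (AkS T A m \ AkS T A (m + 1)) := by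
      ext x
      have hiter : ∀ i : ℕ, T^[i] (T x) = T^[i + 1] x := fun i =>
        (Function.iterate_succ_apply T i x).symm
      simp only [mem_preimage, Dset, mem_setOf_eq, mem_union, mem_diff, AkS, mem_inter_iff]
      constructor
      · rintro ⟨hfore, hm⟩
        rw [hiter] at hm
        by_cases hx : x ∈ A
        · right
          refine ⟨⟨hx, ?_⟩, ?_⟩
          · rw [phi_gt_iff]
            intro j hj1 hjm
            have h20 := hfore (j - 1) (by omega)
            rw [hiter, (show j - 1 + 1 = j by omega)] at h20
            exact h20
          · rintro ⟨-, hgt⟩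
            rw [phi_gt_iff] at hgt
            exact hgt (m + 1) (by omega) le_rfl hm
        · left
          refine ⟨?_, hm⟩
          intro i hi
          cases i with
          | zero => simpa using hx
          | succ i =>
            have h21 := hfore i (by omega)
            rw [hiter] at h21
            exact h21
      · rintro (⟨hfore, hm⟩ | ⟨⟨hxA, hgt⟩, hnot⟩)
        · refine ⟨fun i _ => ?_, by rw [hiter]; exact hm⟩
          rw [hiter]
          exact hfore (i + 1) (by omega)
        · rw [phi_gt_iff] at hgt
          have hm1 : T^[m + 1] x ∈ A := by
            by_contra hm1
            refine hnot ⟨hxA, ?_⟩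
            rw [phi_gt_iff]
            intro j hj1 hjm1
            rcases Nat.lt_or_ge j (m + 1) with hlt | hge
            · exact hgt j hj1 (by omega)
            · have hj : j = m + 1 := by omega
              rw [hj]
              exact hm1
          refine ⟨fun i hi => ?_, by rw [hiter]; exact hm1⟩
          rw [hiter]
          exact hgt (i + 1) (by omega) (by omega)
    have hdisj : Disjoint (Dset T A (m + 1)) (AkS T A m \ AkS T A (m + 1)) := by
      rw [Set.disjoint_left]
      rintro x hx1 hx2
      exact hx1.1 0 (by omega) (by simpa using hx2.1.1)
    have hAkm1 : MeasurableSet (AkS T A (m + 1)) := measurable_AkS hTm hA (m + 1)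
    have hμ1 : μ (T ⁻¹' Dset T A m) = ak μ T A m := by
      rw [hT.measure_preimage (measurable_Dset hTm hA m).nullMeasurableSet, ih]
    have hdiff : μ (AkS T A m \ AkS T A (m + 1)) = ak μ T A m - ak μ T A (m + 1) :=
      measure_diff (AkS_antitone (Nat.le_succ m)) hAkm1.nullMeasurableSet
        (ak_lt_top h1 (m + 1)).ne
    have hsum : ak μ T A m = μ (Dset T A (m + 1)) + (ak μ T A m - ak μ T A (m + 1)) := by
      rw [← hdiff, ← measure_union hdisj ((measurable_AkS hTm hA m).diff hAkm1), ← hkey, hμ1]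
    have hle' : ak μ T A (m + 1) ≤ ak μ T A m := ak_anti (Nat.le_succ m)
    have hcanc : μ (Dset T A (m + 1)) + (ak μ T A m - ak μ T A (m + 1))
        = ak μ T A (m + 1) + (ak μ T A m - ak μ T A (m + 1)) := by
      rw [add_tsub_cancel_of_le hle']
      exact hsum.symm
    exact WithTop.add_right_cancel
      ((tsub_le_self.trans_lt (ak_lt_top h1 m)).ne) hcanc

/-! ### Pointwise case analysis for the Kac process -/

lemma kac_cases (h0 : 0 < μ A) (h1 : μ A < ⊤) (n : ℕ) (x : X) :
    |KacPsi μ T A n (T x) - KacPsi μ T A n x| ≤ (μ A).toReal / W μ T A n ∨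
      (T^[n + 1] x ∈ A ∧
        |KacPsi μ T A n (T x) - KacPsi μ T A n x| ≤
          max ((μ A).toReal / W μ T A n) (KacPsi μ T A n x)) := by
  have hWpos := W_pos (μ := μ) (T := T) (A := A) h0 h1 n
  by_cases hlast : T^[n + 1] x ∈ A
  · right
    refine ⟨hlast, ?_⟩
    have hZ : Z T A n (T x) = n := Z_top hlast
    have hKTx : KacPsi μ T A n (T x) = (μ A).toReal / W μ T A n := by
      have h2 : n - Z T A n (T x) + 1 = 1 := by rw [hZ]; omega
      rw [KacPsi_eq, h2, Sp_one]
    rw [hKTx]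
    exact abs_sub_le_max' (div_nonneg ENNReal.toReal_nonneg hWpos.le)
      (by rw [KacPsi_eq]; exact div_nonneg (Sp_nonneg _) hWpos.le)
  · by_cases hvis : ∃ k, 1 ≤ k ∧ k ≤ n ∧ T^[k] x ∈ A
    · left
      obtain ⟨hL1, hZZ⟩ := Z_mid hvis hlast
      have hZle := Z_le (T := T) (A := A) n x
      have h2 : n - Z T A n (T x) + 1 = (n - Z T A n x + 1) + 1 := by omega
      rw [KacPsi_eq, KacPsi_eq, h2, Sp_succ, add_div, add_sub_cancel_left,
        abs_of_nonneg (div_nonneg ENNReal.toReal_nonneg hWpos.le)]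
      gcongr
      · exact h1.ne
      · exact ak_le
    · left
      have hv : ∀ k, 1 ≤ k → k ≤ n + 1 → T^[k] x ∉ A := by
        intro k hk1 hk2 hkA
        rcases Nat.lt_or_ge k (n + 1) with hlt | hge
        · exact hvis ⟨k, hk1, by omega, hkA⟩
        · have hk : k = n + 1 := by omega
          rw [hk] at hkA
          exact hlast hkA
      obtain ⟨hZ1, hZ2⟩ := Z_none hv
      rw [KacPsi_eq, KacPsi_eq, hZ1, hZ2, sub_self, abs_zero]
      exact div_nonneg ENNReal.toReal_nonneg hWpos.le

/-! ### The bad set is contained in a moving first-hitting set -/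

lemma bad_subset (h0 : 0 < μ A) (h1 : μ A < ⊤) {ε : ℝ} (hε : 0 < ε) (M n : ℕ)
    (hSp : Sp μ T A (M + 1) < ε * W μ T A n) {x : X}
    (hlast : T^[n + 1] x ∈ A) (hΨ : ε ≤ KacPsi μ T A n x) :
    x ∈ (T^[n - M]) ⁻¹' Dset T A (M + 1) := by
  have hWpos := W_pos (μ := μ) (T := T) (A := A) h0 h1 n
  have hnum : ε * W μ T A n ≤ Sp μ T A (n - Z T A n x + 1) := by
    rw [KacPsi_eq] at hΨ
    exact (le_div_iff₀ hWpos).1 hΨ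
  have hZle := Z_le (T := T) (A := A) n x
  have hMZ : M + 1 ≤ n - Z T A n x := by
    by_contra hcon
    have h3 : n - Z T A n x + 1 ≤ M + 1 := by omega
    have h4 := Sp_mono (μ := μ) (T := T) (A := A) h3
    linarith
  have hn : Z T A n x + M + 1 ≤ n := by omega
  show T^[n - M] x ∈ Dset T A (M + 1)
  refine ⟨fun i hi => ?_, ?_⟩
  · rw [← Function.iterate_add_apply]
    exact Z_not_visit (n := n) (by omega) (by omega)
  · rw [← Function.iterate_add_apply]
    have h5 : M + 1 + (n - M) = n + 1 := by omega
    rw [h5]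
    exact hlast

end aux2

/-- `Ψ_n ∘ T − Ψ_n → 0` locally in measure. -/
theorem stmt16 (μ : Measure X) [SigmaFinite μ] (hinf : μ Set.univ = ⊤)
    (T : X → X) (hT : MeasurePreserving T μ μ) (hc : Conservative T μ)
    (he : Ergodic T μ)
    (A : Set X) (hA : MeasurableSet A) (h0 : 0 < μ A) (h1 : μ A < ⊤) :
    ∀ ν : Measure X, IsProbabilityMeasure ν → ν ≪ μ →
      TendstoInMeasure ν
        (fun n x => KacPsi μ T A n (T x) - KacPsi μ T A n x) atTop (fun _ => 0) := by
  intro ν hνp hνμ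
  have hTm := hT.measurable
  refine tendstoInMeasure_iff_dist.2 ?_
  intro ε hε
  have hW := W_tendsto hinf hT hc he hA h0 h1
  have hak := ak_tendsto hTm hc hA h1
  have hset : ∀ n : ℕ,
      {x | ε ≤ dist (KacPsi μ T A n (T x) - KacPsi μ T A n x) ((fun _ => (0 : ℝ)) x)} =
      {x | ε ≤ |KacPsi μ T A n (T x) - KacPsi μ T A n x|} := by
    intro n; ext x; simp [Real.dist_eq]
  rw [ENNReal.tendsto_nhds_zero]
  intro δ hδ
  have hint : ∫⁻ x, ν.rnDeriv μ x ∂μ ≠ ⊤ := by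
    refine ne_of_lt (lt_of_le_of_lt Measure.lintegral_rnDeriv_le ?_)
    rw [measure_univ]
    exact ENNReal.one_lt_top
  obtain ⟨η, hη, hsmall⟩ := exists_pos_setLIntegral_lt_of_measure_lt hint hδ.ne'
  obtain ⟨M, hM⟩ : ∃ M, ak μ T A (M + 1) < η := by
    obtain ⟨K, hK⟩ := (hak.eventually_lt_const hη).exists
    exact ⟨K, lt_of_le_of_lt (ak_anti (μ := μ) (T := T) (A := A) (Nat.le_succ K)) hK⟩
  have hE1 : ∀ᶠ n in atTop, (μ A).toReal / ε < W μ T A n := hW.eventually_gt_atTop _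
  have hE2 : ∀ᶠ n in atTop, Sp μ T A (M + 1) / ε < W μ T A n := hW.eventually_gt_atTop _
  filter_upwards [hE1, hE2] with n h1' h2'
  have hWpos := W_pos (μ := μ) (T := T) (A := A) h0 h1 n
  have hq : (μ A).toReal / W μ T A n < ε := by
    rw [div_lt_iff₀ hWpos, mul_comm]
    exact (div_lt_iff₀ hε).1 h1'
  have hSp : Sp μ T A (M + 1) < ε * W μ T A n :=
    lt_of_lt_of_eq ((div_lt_iff₀ hε).1 h2') (mul_comm _ _)
  have hsub : {x | ε ≤ |KacPsi μ T A n (T x) - KacPsi μ T A n x|} ⊆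
      (T^[n - M]) ⁻¹' Dset T A (M + 1) := by
    intro x hx
    rcases kac_cases (μ := μ) (T := T) (A := A) h0 h1 n x with hcase | ⟨hlast, hcase⟩
    · exact absurd (le_trans hx hcase) (not_le.2 hq)
    · have hΨ : ε ≤ KacPsi μ T A n x := by
        rcases le_max_iff.1 (le_trans hx hcase) with h | h
        · exact absurd h (not_le.2 hq)
        · exact h
      exact bad_subset h0 h1 hε M n hSp hlast hΨ
  have hpre : MeasurableSet ((T^[n - M]) ⁻¹' Dset T A (M + 1)) :=
    (measurable_Dset hTm hA (M + 1)).preimage (hTm.iterate (n - M))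
  have hμpre : μ ((T^[n - M]) ⁻¹' Dset T A (M + 1)) < η := by
    rw [(hT.iterate (n - M)).measure_preimage
      (measurable_Dset hTm hA (M + 1)).nullMeasurableSet,
      Dset_measure hT hA h1 (M + 1)]
    exact hM
  calc ν {x | ε ≤ dist (KacPsi μ T A n (T x) - KacPsi μ T A n x) ((fun _ => (0 : ℝ)) x)}
      = ν {x | ε ≤ |KacPsi μ T A n (T x) - KacPsi μ T A n x|} := by rw [hset n]
    _ ≤ ν ((T^[n - M]) ⁻¹' Dset T A (M + 1)) := measure_mono hsub
    _ = ∫⁻ x in (T^[n - M]) ⁻¹' Dset T A (M + 1), ν.rnDeriv μ x ∂μ :=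
        (Measure.setLIntegral_rnDeriv' hνμ hpre).symm
    _ ≤ δ := (hsmall _ hμpre).le

end
end
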